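/- There exists a profinite group G such that the set of all commutators of G is contained in the union of 3 procyclic subgroups, yet the derived subgroup G' is infinite and not procyclic. (For instance, one may take G = A × B where A is a finite group with A' noncyclic of order four and B is a pro-p group, p an odd prime, with B' infinite procyclic.) -/

import Mathlib

/-- A subgroup of a topological group is procyclic if it is closed and is the
topological closure of a subgroup generated by a single element. -/
def IsProcyclicSubgroup {G : Type*} [Group G] [TopologicalSpace G] [IsTopologicalGroup G]
    (H : Subgroup G) : Prop :=
  IsClosed (H : Set G) ∧ ∃ x : G, H = (Subgroup.closure {x}).topologicalClosure

open scoped commutatorElement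
open PadicInt

namespace PF

/-- The sign character. -/
noncomputable def sgn (s : ZMod 2) : ℤ_[3] := if s = 0 then 1 else -1

lemma sgn_add (s t : ZMod 2) : sgn (s + t) = sgn s * sgn t := by
  rcases (by decide : ∀ s : ZMod 2, s = 0 ∨ s = 1) s with rfl | rfl <;>
  rcases (by decide : ∀ s : ZMod 2, s = 0 ∨ s = 1) t with rfl | rfl <;>
    simp [sgn, show (1 + 1 : ZMod 2) = 0 by decide, show (1 : ZMod 2) ≠ 0 by decide]

lemma sgn_zero : sgn 0 = 1 := rfl

lemma sgn_mul_self (s : ZMod 2) : sgn s * sgn s = 1 := by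
  rcases (by decide : ∀ s : ZMod 2, s = 0 ∨ s = 1) s with rfl | rfl <;>
    simp [sgn, show (1 : ZMod 2) ≠ 0 by decide]

/-- The pro-3 "dihedral" group `ℤ_3 ⋊ C2`. -/
def B : Type := ℤ_[3] × ZMod 2

namespace B

noncomputable instance : Group B where
  mul x y := (x.1 + sgn x.2 * y.1, x.2 + y.2)
  one := ((0 : ℤ_[3]), (0 : ZMod 2))
  inv x := (-(sgn x.2 * x.1), x.2)
  mul_assoc x y z := by
    show (_, _) = (_, _)
    rw [Prod.mk.injEq]
    constructor
    · show x.1 + sgn x.2 * y.1 + sgn (x.2 + y.2) * z.1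
        = x.1 + sgn x.2 * (y.1 + sgn y.2 * z.1)
      rw [sgn_add]; ring
    · show x.2 + y.2 + z.2 = x.2 + (y.2 + z.2); ring
  one_mul x := by
    show ((0 : ℤ_[3]) + sgn 0 * x.1, 0 + x.2) = x
    rw [sgn_zero]; ext <;> simp
  mul_one x := by
    show (x.1 + sgn x.2 * 0, x.2 + 0) = x
    ext <;> simp
  inv_mul_cancel x := by
    show (-(sgn x.2 * x.1) + sgn x.2 * x.1, x.2 + x.2) = ((0 : ℤ_[3]), (0 : ZMod 2))
    rw [Prod.mk.injEq]
    exact ⟨by ring, (by decide : ∀ s : ZMod 2, s + s = 0) x.2⟩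

lemma mul_def (x y : B) : x * y = (x.1 + sgn x.2 * y.1, x.2 + y.2) := rfl
lemma inv_def (x : B) : x⁻¹ = (-(sgn x.2 * x.1), x.2) := rfl
lemma one_def : (1 : B) = ((0 : ℤ_[3]), (0 : ZMod 2)) := rfl

noncomputable instance : TopologicalSpace B := inferInstanceAs (TopologicalSpace (ℤ_[3] × ZMod 2))
instance : CompactSpace B := inferInstanceAs (CompactSpace (ℤ_[3] × ZMod 2))
instance : T2Space B := inferInstanceAs (T2Space (ℤ_[3] × ZMod 2))
instance : TotallyDisconnectedSpace B :=
  inferInstanceAs (TotallyDisconnectedSpace (ℤ_[3] × ZMod 2))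

lemma continuous_sgn : Continuous sgn := continuous_of_discreteTopology

instance : IsTopologicalGroup B where
  continuous_mul := by
    apply Continuous.prodMk
    · exact ((continuous_fst.comp continuous_fst).add
        (((continuous_sgn.comp (continuous_snd.comp continuous_fst))).mul
          (continuous_fst.comp continuous_snd)))
    · exact (continuous_of_discreteTopology (f := fun p : ZMod 2 × ZMod 2 => p.1 + p.2)).comp
        ((continuous_snd.comp continuous_fst).prodMk (continuous_snd.comp continuous_snd))
  continuous_inv := by
    apply Continuous.prodMk
    · exact ((continuous_sgn.comp continuous_snd).mul continuous_fst).neg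
    · exact continuous_snd

end B

end PF
namespace PF

abbrev D4 := DihedralGroup 4

instance : TopologicalSpace D4 := ⊥
instance : DiscreteTopology D4 := ⟨rfl⟩
instance : IsTopologicalGroup D4 where
  continuous_mul := continuous_of_discreteTopology
  continuous_inv := continuous_of_discreteTopology

abbrev A := D4 × D4

/-- The big group. -/
abbrev G := A × B

/-- The three nontrivial elements of the derived subgroup of `A`. -/
def t : Fin 3 → A := ![(DihedralGroup.r 2, 1), (1, DihedralGroup.r 2),
  (DihedralGroup.r 2, DihedralGroup.r 2)]

lemma t_sq (i : Fin 3) : (t i) ^ 2 = 1 := by fin_cases i <;> decide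

set_option maxRecDepth 10000 in
lemma commA (a b : A) : ⁅a, b⁆ = 1 ∨ ⁅a, b⁆ = t 0 ∨ ⁅a, b⁆ = t 1 ∨ ⁅a, b⁆ = t 2 := by
  revert a b; decide

/-- embedding of `ℤ_3` into `B`. -/
noncomputable def φ : Multiplicative ℤ_[3] →* B where
  toFun w := (Multiplicative.toAdd w, 0)
  map_one' := rfl
  map_mul' x y := by
    show ((Multiplicative.toAdd x + Multiplicative.toAdd y : ℤ_[3]), (0 : ZMod 2))
      = ((Multiplicative.toAdd x + sgn 0 * Multiplicative.toAdd y : ℤ_[3]), (0 + 0 : ZMod 2))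
    rw [sgn_zero]; ext <;> simp

lemma continuous_φ : Continuous φ :=
  (continuous_id (X := ℤ_[3])).prodMk continuous_const

/-- embedding of `ℤ_3` into `G`. -/
noncomputable def f : ℤ_[3] →  G := fun w => (1, φ (Multiplicative.ofAdd w))

lemma continuous_f : Continuous f :=
  continuous_const.prodMk (continuous_φ.comp continuous_id)

lemma f_injective : Function.Injective f := by
  intro x y h
  have : φ (Multiplicative.ofAdd x) = φ (Multiplicative.ofAdd y) := congrArg Prod.snd h
  have h2 : ((x, (0:ZMod 2)) : ℤ_[3] × ZMod 2) = (y, 0) := this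
  exact congrArg Prod.fst h2

end PF
namespace PF

lemma sgn_one : sgn 1 = -1 := rfl

lemma isUnit_two : IsUnit (2 : ℤ_[3]) := by
  rw [PadicInt.isUnit_iff]
  have h1 : ‖(2 : ℤ_[3])‖ ≤ 1 := PadicInt.norm_le_one _
  rcases lt_or_eq_of_le h1 with h | h
  · exfalso
    have h2 : ((2 : ℤ) : ℤ_[3]) = (2 : ℤ_[3]) := by push_cast; ring
    have : ((3 : ℕ) : ℤ) ∣ (2 : ℤ) := by
      rw [← PadicInt.norm_int_lt_one_iff_dvd (p := 3) 2, h2]; exact h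
    omega
  · exact h

/-- Every element of `ℤ_[3]` is in the closure of the even naturals. -/
lemma mem_closure_even (z : ℤ_[3]) :
    z ∈ closure (Set.range fun n : ℕ => ((2 * n : ℕ) : ℤ_[3])) := by
  obtain ⟨u, hu⟩ := isUnit_two
  set w : ℤ_[3] := ((u⁻¹ : Units ℤ_[3]) : ℤ_[3]) * z with hwdef
  have hw : w ∈ closure (Set.range (Nat.cast : ℕ → ℤ_[3])) :=
    PadicInt.denseRange_natCast _
  have hz : z = 2 * w := by
    rw [hwdef, ← mul_assoc, ← hu, ← Units.val_mul, mul_inv_cancel, Units.val_one, one_mul]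
  have hcont : Continuous fun x : ℤ_[3] => 2 * x := continuous_const.mul continuous_id
  have himg : (fun x : ℤ_[3] => 2 * x) '' Set.range (Nat.cast : ℕ → ℤ_[3])
      = Set.range fun n : ℕ => ((2 * n : ℕ) : ℤ_[3]) := by
    ext x
    simp only [Set.mem_image, Set.mem_range]
    constructor
    · rintro ⟨-, ⟨n, rfl⟩, rfl⟩; exact ⟨n, by push_cast; ring⟩
    · rintro ⟨n, rfl⟩; exact ⟨n, ⟨n, rfl⟩, by push_cast; ring⟩
  have : 2 * w ∈ closure ((fun x : ℤ_[3] => 2 * x) '' Set.range (Nat.cast : ℕ → ℤ_[3])) :=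
    image_closure_subset_closure_image hcont ⟨w, hw, rfl⟩
  rw [himg] at this
  rw [hz]; exact this

/-- The generators. -/
noncomputable def g : Fin 3 → G := fun i => (t i, φ (Multiplicative.ofAdd (1 : ℤ_[3])))

/-- The three procyclic subgroups. -/
noncomputable def C : Fin 3 → Subgroup G :=
  fun i => (Subgroup.closure {g i}).topologicalClosure

lemma g_pow (i : Fin 3) (n : ℕ) :
    (g i) ^ (2 * n) = f ((2 * n : ℕ) : ℤ_[3]) := by
  have h1 : (g i) ^ (2 * n) = ((t i) ^ (2 * n), φ (Multiplicative.ofAdd (1 : ℤ_[3])) ^ (2 * n)) :=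
    rfl
  rw [h1]
  have h2 : (t i) ^ (2 * n) = 1 := by
    rw [pow_mul, t_sq, one_pow]
  have h3 : φ (Multiplicative.ofAdd (1 : ℤ_[3])) ^ (2 * n)
      = φ (Multiplicative.ofAdd (((2 * n : ℕ) : ℤ_[3]))) := by
    rw [← map_pow]
    congr 1
    rw [← ofAdd_nsmul]
    congr 1
    simp [nsmul_eq_mul]
  rw [h2, h3]; rfl

/-- If a subgroup contains all `f (2n)`, its closure contains all `f z`. -/
lemma f_mem_closure_of (S : Subgroup G) (h : ∀ n : ℕ, f ((2 * n : ℕ) : ℤ_[3]) ∈ S)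
    (z : ℤ_[3]) : f z ∈ S.topologicalClosure := by
  rw [← SetLike.mem_coe, Subgroup.topologicalClosure_coe]
  have h1 : f z ∈ closure (f '' Set.range fun n : ℕ => ((2 * n : ℕ) : ℤ_[3])) :=
    image_closure_subset_closure_image continuous_f ⟨z, mem_closure_even z, rfl⟩
  refine closure_mono ?_ h1
  rintro - ⟨-, ⟨n, rfl⟩, rfl⟩
  exact h n

lemma f_mem_C (i : Fin 3) (z : ℤ_[3]) : f z ∈ C i := by
  apply f_mem_closure_of
  intro n
  rw [← g_pow]
  exact pow_mem (Subgroup.subset_closure (Set.mem_singleton _)) _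

lemma tφ_mem_C (i : Fin 3) (z : ℤ_[3]) :
    ((t i, φ (Multiplicative.ofAdd z)) : G) ∈ C i := by
  have h1 : ((t i, φ (Multiplicative.ofAdd z)) : G) = g i * f (z - 1) := by
    show _ = ((t i * 1 : A), φ (Multiplicative.ofAdd (1 : ℤ_[3])) * φ (Multiplicative.ofAdd (z - 1)))
    rw [mul_one, ← map_mul]
    congr 2
    rw [← ofAdd_add]
    congr 1
    ring
  rw [h1]
  exact mul_mem ((Subgroup.le_topologicalClosure _) (Subgroup.subset_closure (Set.mem_singleton _))) (f_mem_C i (z - 1))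

/-- every commutator in `B` lies in the image of `φ`. -/
lemma commB (u v : B) : ∃ z : ℤ_[3], ⁅u, v⁆ = φ (Multiplicative.ofAdd z) := by
  refine ⟨(⁅u, v⁆ : B).1, ?_⟩
  have hsnd : (⁅u, v⁆ : B).2 = 0 := by
    have h1 : (⁅u, v⁆ : B).2 = u.2 + v.2 + u.2 + v.2 := rfl
    rw [h1]
    exact (by decide : ∀ s t : ZMod 2, s + t + s + t = 0) u.2 v.2
  have : φ (Multiplicative.ofAdd ((⁅u, v⁆ : B).1)) = (((⁅u, v⁆ : B).1 : ℤ_[3]), (0 : ZMod 2)) := rfl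
  rw [this]
  exact Prod.ext rfl hsnd

end PF
namespace PF

lemma comm_prod (x y : G) : ⁅x, y⁆ = ((⁅x.1, y.1⁆ : A), (⁅x.2, y.2⁆ : B)) := rfl

lemma coverage (x y : G) : ⁅x, y⁆ ∈ ⋃ i, ((C i : Subgroup G) : Set G) := by
  obtain ⟨z, hz⟩ := commB x.2 y.2
  rcases commA x.1 y.1 with h | h | h | h
  · refine Set.mem_iUnion.2 ⟨0, ?_⟩
    have : ⁅x, y⁆ = f z := by rw [comm_prod, h, hz]; rfl
    rw [this]; exact f_mem_C 0 z
  · refine Set.mem_iUnion.2 ⟨0, ?_⟩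
    have : ⁅x, y⁆ = ((t 0 : A), φ (Multiplicative.ofAdd z)) := by rw [comm_prod, h, hz]
    rw [this]; exact tφ_mem_C 0 z
  · refine Set.mem_iUnion.2 ⟨1, ?_⟩
    have : ⁅x, y⁆ = ((t 1 : A), φ (Multiplicative.ofAdd z)) := by rw [comm_prod, h, hz]
    rw [this]; exact tφ_mem_C 1 z
  · refine Set.mem_iUnion.2 ⟨2, ?_⟩
    have : ⁅x, y⁆ = ((t 2 : A), φ (Multiplicative.ofAdd z)) := by rw [comm_prod, h, hz]
    rw [this]; exact tφ_mem_C 2 z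

/-- the auxiliary element of `B` of order two. -/
noncomputable def v : B := ((0 : ℤ_[3]), (1 : ZMod 2))

lemma φ_fst (a : ℤ_[3]) : (φ (Multiplicative.ofAdd a)).1 = a := rfl
lemma φ_snd (a : ℤ_[3]) : (φ (Multiplicative.ofAdd a)).2 = 0 := rfl
lemma v_fst : v.1 = 0 := rfl
lemma v_snd : v.2 = 1 := rfl

lemma commB_elem (a : ℤ_[3]) : ⁅φ (Multiplicative.ofAdd a), v⁆
    = φ (Multiplicative.ofAdd (2 * a)) := by
  show φ (Multiplicative.ofAdd a) * v * (φ (Multiplicative.ofAdd a))⁻¹ * v⁻¹ = _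
  rw [B.mul_def, B.mul_def, B.mul_def, B.inv_def, B.inv_def]
  refine Prod.ext ?_ ?_
  · simp only [φ_fst, φ_snd, v_fst, v_snd, zero_add, add_zero,
      sgn_zero, sgn_one, one_mul, mul_zero, neg_zero, mul_neg, neg_neg]
    ring
  · simp only [φ_snd, v_snd]
    decide

lemma comm_f (n : ℕ) :
    ⁅((1 : A), φ (Multiplicative.ofAdd ((n : ℕ) : ℤ_[3]))), ((1 : A), v)⁆
      = f ((2 * n : ℕ) : ℤ_[3]) := by
  rw [comm_prod]
  have h1 : ⁅(1 : A), (1 : A)⁆ = 1 := by simp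
  rw [h1]
  rw [commB_elem]
  have h3 : ((2 * n : ℕ) : ℤ_[3]) = 2 * (n : ℤ_[3]) := by push_cast; ring
  show _ = ((1 : A), φ (Multiplicative.ofAdd ((2 * n : ℕ) : ℤ_[3])))
  rw [h3]

lemma f_mem_commclosure (z : ℤ_[3]) : f z ∈ (commutator G).topologicalClosure := by
  apply f_mem_closure_of
  intro n
  rw [← comm_f n]
  exact Subgroup.commutator_mem_commutator (Subgroup.mem_top _) (Subgroup.mem_top _)

lemma infinite_commclosure : Infinite ((commutator G).topologicalClosure) := by
  apply Infinite.of_injective (fun z : ℤ_[3] => (⟨f z, f_mem_commclosure z⟩ :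
    (commutator G).topologicalClosure))
  intro a b h
  exact f_injective (congrArg Subtype.val h)

lemma no_cyclic (a : A) : ¬(t 0 ∈ Subgroup.zpowers a ∧ t 1 ∈ Subgroup.zpowers a) := by
  have ha : a ^ 4 = 1 := (by decide : ∀ a : A, a ^ 4 = 1) a
  rintro ⟨h0, h1⟩
  have key : ∀ b : A, b ∈ Subgroup.zpowers a → ∃ m : Fin 4, a ^ (m : ℕ) = b := by
    intro b hb
    obtain ⟨n, hn⟩ := (Submonoid.mem_powers_iff _ _).1 (mem_powers_iff_mem_zpowers.2 hb)
    refine ⟨⟨n % 4, Nat.mod_lt _ (by norm_num)⟩, ?_⟩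
    rw [← pow_eq_pow_mod n ha]; exact hn
  obtain ⟨m0, hm0⟩ := key _ h0
  obtain ⟨m1, hm1⟩ := key _ h1
  clear h0 h1 key ha
  revert hm0 hm1
  revert m0 m1
  revert a
  decide

/-- first components of elements of `(t i, 1)` are commutators. -/
lemma tA_mem_comm (i : Fin 3) : ((t i, (1 : B)) : G) ∈ commutator G := by
  have h1 : ∃ a b : A, ⁅a, b⁆ = t i := by
    fin_cases i
    · exact ⟨(DihedralGroup.r 1, 1), (DihedralGroup.sr 0, 1), by decide⟩
    · exact ⟨(1, DihedralGroup.r 1), (1, DihedralGroup.sr 0), by decide⟩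
    · exact ⟨(DihedralGroup.r 1, DihedralGroup.r 1), (DihedralGroup.sr 0, DihedralGroup.sr 0),
        by decide⟩
  obtain ⟨a, b, hab⟩ := h1
  have h2 : ((t i, (1 : B)) : G) = ⁅((a, 1) : G), ((b, 1) : G)⁆ := by
    rw [comm_prod]
    show _ = (⁅a, b⁆, ⁅(1 : B), (1 : B)⁆)
    rw [hab]
    congr 1
    simp
  rw [h2]
  exact Subgroup.commutator_mem_commutator (Subgroup.mem_top _) (Subgroup.mem_top _)

lemma not_procyclic : ¬ IsProcyclicSubgroup ((commutator G).topologicalClosure) := by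
  rintro ⟨-, x, hx⟩
  set K : Subgroup G := Subgroup.comap (MonoidHom.fst A B) (Subgroup.zpowers x.1) with hK
  have hKclosed : IsClosed (K : Set G) := by
    rw [hK, Subgroup.coe_comap]
    exact (isClosed_discrete _).preimage continuous_fst
  have hle : (Subgroup.closure {x}).topologicalClosure ≤ K := by
    apply Subgroup.topologicalClosure_minimal _ _ hKclosed
    rw [Subgroup.closure_le]
    intro y hy
    rw [Set.mem_singleton_iff] at hy
    subst hy
    exact Subgroup.mem_zpowers _
  have hmem : ∀ i : Fin 3, t i ∈ Subgroup.zpowers x.1 := by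
    intro i
    have := hle (hx ▸ (Subgroup.le_topologicalClosure _) (tA_mem_comm i))
    exact this
  exact no_cyclic x.1 ⟨hmem 0, hmem 1⟩

end PF
/-- There exists a profinite group `G` in which all commutators are contained in the union of
`3` procyclic subgroups, yet the derived (closed) subgroup `G'` is infinite and not
procyclic. -/
theorem exists_profinite_commutators_covered_derived_not_procyclic :
    ∃ (G : Type) (_ : Group G) (_ : TopologicalSpace G) (_ : IsTopologicalGroup G)
      (_ : CompactSpace G) (_ : T2Space G) (_ : TotallyDisconnectedSpace G),
      ∃ C : Fin 3 → Subgroup G, (∀ i, IsProcyclicSubgroup (C i)) ∧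
        (∀ x y : G, ⁅x, y⁆ ∈ ⋃ i, ((C i : Subgroup G) : Set G)) ∧
        Infinite ((commutator G).topologicalClosure) ∧
        ¬ IsProcyclicSubgroup ((commutator G).topologicalClosure) := by
  refine ⟨PF.G, inferInstance, inferInstance, inferInstance, inferInstance, inferInstance,
    inferInstance, PF.C, ?_, PF.coverage, PF.infinite_commclosure, PF.not_procyclic⟩
  intro i
  exact ⟨Subgroup.isClosed_topologicalClosure _, PF.g i, rfl⟩
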